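/- Let A be a self-adjoint operator on a Hilbert space H with complete orthonormal eigenbasis {φ_j} and negative eigenvalues λ_j → −∞, generating the semigroup S(t), and let b ∈ H. If U = ℝ, Ω = ℝ⁺ = {α ≥ 0}, and B : ℝ → H is Bu = ub, then there exists a nonzero g ∈ H with ⟨S(t)b, g⟩ ≤ 0 for all t ≥ 0; in particular one may take g = −φ_{j₀} or g = φ_{j₀} for an index j₀ with ⟨b, φ_{j₀}⟩ ≠ 0 (choosing the sign so that ⟨b, g⟩ ≤ 0), or any nonzero g orthogonal to all φ_j appearing in b if b has a zero coefficient. -/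

import Mathlib

open Filter

/-- Obstruction to constrained controllability (Corollary 2): for a self-adjoint
generator with complete orthonormal eigenbasis `φ j`, negative eigenvalues `l j → -∞`,
semigroup acting by `⟪S t x, φ j⟫ = e^{l j t} ⟪x, φ j⟫`, and the rank-one control
operator `B u = u • b` with scalar controls `u ≥ 0`, there is a nonzero `g ∈ H` with
`⟪S t b, g⟫ ≤ 0` for all `t ≥ 0`. -/
theorem stmt_12 {H : Type*} [NormedAddCommGroup H] [InnerProductSpace ℝ H] [CompleteSpace H]
    (φ : ℕ → H) (hortho : Orthonormal ℝ φ)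
    (hcomplete : ∀ x : H, (∀ j, (inner ℝ x (φ j) : ℝ) = 0) → x = 0)
    (l : ℕ → ℝ) (hlneg : ∀ j, l j < 0) (hlim : Tendsto l atTop atBot)
    (S : ℝ → H →L[ℝ] H)
    (hS : ∀ t : ℝ, 0 ≤ t → ∀ x : H, ∀ j,
      (inner ℝ (S t x) (φ j) : ℝ) = Real.exp (l j * t) * inner ℝ x (φ j))
    (b : H) :
    ∃ g : H, g ≠ 0 ∧ ∀ t : ℝ, 0 ≤ t → (inner ℝ (S t b) g : ℝ) ≤ 0 := by
  set c : ℝ := inner ℝ b (φ 0) with hc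
  have hφ0 : φ 0 ≠ 0 := hortho.ne_zero 0
  by_cases h : c = 0
  · refine ⟨φ 0, hφ0, fun t ht => ?_⟩
    rw [hS t ht b 0, ← hc, h, mul_zero]
  · refine ⟨(-c) • φ 0, ?_, fun t ht => ?_⟩
    · simp [smul_eq_zero, h, hφ0]
    · rw [inner_smul_right, hS t ht b 0, ← hc]
      have : -c * (Real.exp (l 0 * t) * c) = -(Real.exp (l 0 * t) * c ^ 2) := by ring
      rw [this]
      exact neg_nonpos.mpr (mul_nonneg (Real.exp_nonneg _) (sq_nonneg c))
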